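/- arXiv:2111.12257 — 5 statements merged into one kernel-verified Lean document; each statement's English description precedes it below -/
import Mathlib

section
/- Let Π_A and Π_B be orthogonal projections on ℂⁿ and let ρ be a density matrix with Π_A ρ Π_A = ρ. Let P be the matrix of the orthogonal projection of ℂⁿ onto the column space of Π_A·Π_B, and suppose P ρ = ρ (ρ is supported on the range of Π_AΠ_B). Then there exists a density matrix ρ' with Π_B ρ' Π_B = ρ' and Tr(Π_A ρ') > 0 such that Π_A ρ' Π_A = Tr(Π_A ρ') • ρ; that is, ρ is exactly the state obtained from ρ' by applying the measurement of Π_A and post-selecting (renormalizing) on outcome 1. -/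
open Matrix
open scoped ComplexOrder

section Helpers

variable {n : ℕ}

lemma myDiagSandwich (U : Matrix (Fin n) (Fin n) ℂ) (hU : Uᴴ * U = 1)
    (v w : Fin n → ℂ) :
    (U * diagonal v * Uᴴ) * (U * diagonal w * Uᴴ)
      = U * diagonal (fun i => v i * w i) * Uᴴ := by
  rw [← diagonal_mul_diagonal]
  simp only [Matrix.mul_assoc]
  congr 1
  rw [← Matrix.mul_assoc Uᴴ U, hU, Matrix.one_mul, ← Matrix.mul_assoc]

lemma myPinvProj {A : Matrix (Fin n) (Fin n) ℂ} (hA : A.IsHermitian) :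
    ∃ B Q : Matrix (Fin n) (Fin n) ℂ,
      Q = A * B ∧ Bᴴ = B ∧ Qᴴ = Q ∧ Q * Q = Q ∧ Q * A = A := by
  set U : Matrix (Fin n) (Fin n) ℂ := ↑hA.eigenvectorUnitary with hUdef
  have hU : Uᴴ * U = 1 := by
    rw [← Matrix.star_eq_conjTranspose]
    exact Unitary.coe_star_mul_self hA.eigenvectorUnitary
  set d : Fin n → ℂ := RCLike.ofReal ∘ hA.eigenvalues with hddef
  have hspec : A = U * diagonal d * Uᴴ := by
    rw [← Matrix.star_eq_conjTranspose]
    exact hA.spectral_theorem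
  have hdstar : ∀ i, star (d i) = d i := fun i => by
    simp [hddef, RCLike.star_def, RCLike.conj_ofReal]
  have hsand : ∀ v : Fin n → ℂ, (∀ i, star (v i) = v i) →
      (U * diagonal v * Uᴴ)ᴴ = U * diagonal v * Uᴴ := by
    intro v hv
    simp only [conjTranspose_mul, conjTranspose_conjTranspose, diagonal_conjTranspose]
    have : star v = v := funext hv
    rw [this, Matrix.mul_assoc]
  set e : Fin n → ℂ := fun i => (d i)⁻¹ with hedef
  have hestar : ∀ i, star (e i) = e i := fun i => by
    rw [hedef]; rw [star_inv₀, hdstar i]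
  have hf : ∀ i, star (d i * e i) = d i * e i := fun i => by
    rw [star_mul', hestar i, hdstar i, mul_comm]
  have hff : ∀ i, (d i * e i) * (d i * e i) = d i * e i := fun i => by
    rcases eq_or_ne (d i) 0 with h | h
    · simp [hedef, h]
    · simp [hedef, mul_inv_cancel₀ h]
  have hfd : ∀ i, (d i * e i) * d i = d i := fun i => by
    rcases eq_or_ne (d i) 0 with h | h
    · simp [hedef, h]
    · simp [hedef, mul_inv_cancel₀ h]
  have h1 : A * (U * diagonal e * Uᴴ) = U * diagonal (fun i => d i * e i) * Uᴴ := by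
    rw [hspec]; exact myDiagSandwich U hU d e
  refine ⟨U * diagonal e * Uᴴ, A * (U * diagonal e * Uᴴ), rfl, ?_, ?_, ?_, ?_⟩
  · exact hsand e hestar
  · rw [h1]; exact hsand _ hf
  · rw [h1, myDiagSandwich U hU]
    rw [show (fun i => (d i * e i) * (d i * e i)) = fun i => d i * e i from funext hff]
  · conv_lhs => rw [h1, hspec, myDiagSandwich U hU]
    conv_rhs => rw [hspec]
    rw [show (fun i => (d i * e i) * d i) = d from funext hfd]

lemma myIdemAbsorb {R S : Matrix (Fin n) (Fin n) ℂ} (hR : R * R = R)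
    (h : LinearMap.range S.mulVecLin ≤ LinearMap.range R.mulVecLin) :
    R * S = S := by
  ext i j
  obtain ⟨y, hy⟩ := h (LinearMap.mem_range_self S.mulVecLin (Pi.single j 1))
  simp only [Matrix.mulVecLin_apply] at hy
  have fix : R *ᵥ (S *ᵥ Pi.single j 1) = S *ᵥ Pi.single j 1 := by
    rw [← hy, mulVec_mulVec, hR]
  have h1 : (R * S) *ᵥ Pi.single j 1 = S *ᵥ Pi.single j 1 := by
    rw [← mulVec_mulVec, fix]
  have := congr_fun h1 i
  simpa using this

lemma myTraceZero {Y : Matrix (Fin n) (Fin n) ℂ} (h : (Yᴴ * Y).trace = 0) :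
    Y = 0 := by
  have hterm : ∀ j, (Yᴴ * Y) j j = dotProduct (star fun i => Y i j) (fun i => Y i j) := by
    intro j
    simp [Matrix.mul_apply, dotProduct, conjTranspose_apply]
  have hnn : ∀ j ∈ Finset.univ, (0 : ℂ) ≤ (Yᴴ * Y) j j := fun j _ => by
    rw [hterm]; exact dotProduct_star_self_nonneg _
  have hsum : ∀ j ∈ Finset.univ, (Yᴴ * Y) j j = 0 := by
    rw [← Finset.sum_eq_zero_iff_of_nonneg hnn]
    simpa [Matrix.trace, Matrix.diag] using h
  ext i j
  have hj := hsum j (Finset.mem_univ j)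
  rw [hterm] at hj
  have := dotProduct_star_self_eq_zero.mp hj
  simpa using congr_fun this i

lemma myDiagNonneg {A : Matrix (Fin n) (Fin n) ℂ} (hA : A.PosSemidef) (i : Fin n) :
    (0 : ℂ) ≤ A i i := by
  exact hA.diag_nonneg

end Helpers

/-- **Exact pseudoinverse state.**
Let `PA, PB` be orthogonal projections on `ℂⁿ` and `ρ` a density matrix with
`PA ρ PA = ρ`.  Let `P` be the orthogonal projection onto the column space of
`PA·PB`, and suppose `P ρ = ρ` (i.e. `ρ` is supported on the range of `PA·PB`).
Then there is a density matrix `ρ'` supported in the image of `PB`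
(`PB ρ' PB = ρ'`) with `Tr(PA ρ') > 0` such that `PA ρ' PA = Tr(PA ρ') • ρ`:
`ρ` is exactly the state obtained from `ρ'` by measuring `PA` and post-selecting
on outcome `1`. -/
theorem exact_pseudoinverse {n : ℕ}
    (PA PB P ρ : Matrix (Fin n) (Fin n) ℂ)
    (hPAher : PAᴴ = PA) (hPAidem : PA * PA = PA)
    (hPBher : PBᴴ = PB) (hPBidem : PB * PB = PB)
    (hρ : ρ.PosSemidef) (hρtr : ρ.trace = 1) (hρsupp : PA * ρ * PA = ρ)
    (hPher : Pᴴ = P) (hPidem : P * P = P)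
    (hPrange : LinearMap.range P.mulVecLin = LinearMap.range (PA * PB).mulVecLin)
    (hPρ : P * ρ = ρ) :
    ∃ ρ' : Matrix (Fin n) (Fin n) ℂ,
      ρ'.PosSemidef ∧ ρ'.trace = 1 ∧
      PB * ρ' * PB = ρ' ∧
      0 < ((PA * ρ').trace).re ∧
      PA * ρ' * PA = ((PA * ρ').trace) • ρ := by
  obtain ⟨M, hMdef⟩ : ∃ M, M = PA * PB := ⟨_, rfl⟩
  rw [← hMdef] at hPrange
  have hMH : Mᴴ = PB * PA := by rw [hMdef, conjTranspose_mul, hPAher, hPBher]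
  have hA : (M * Mᴴ).IsHermitian := isHermitian_mul_conjTranspose_self M
  obtain ⟨B, Q, hQdef, hBher, hQher, hQidem, hQA⟩ := myPinvProj hA
  -- basic identities
  have hPAMH : PA * Mᴴ = M * Mᴴ := by
    rw [hMH, hMdef]
    calc PA * (PB * PA) = PA * ((PB * PB) * PA) := by rw [hPBidem]
      _ = (PA * PB) * (PB * PA) := by simp only [Matrix.mul_assoc]
  have hMPA : M * PA = M * Mᴴ := by
    rw [hMH, hMdef]
    calc PA * PB * PA = PA * ((PB * PB) * PA) := by
          rw [hPBidem]; simp only [Matrix.mul_assoc]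
      _ = (PA * PB) * (PB * PA) := by simp only [Matrix.mul_assoc]
  have hAQ : (M * Mᴴ) * Q = M * Mᴴ := by
    have := congrArg conjTranspose hQA
    rwa [conjTranspose_mul, hQher, hA.eq] at this
  -- Q * M = M
  have hQM : Q * M = M := by
    have hNN : (M - Q * M) * (M - Q * M)ᴴ = 0 := by
      have h1 : (M - Q * M)ᴴ = Mᴴ - Mᴴ * Q := by
        rw [conjTranspose_sub, conjTranspose_mul Q M, hQher]
      rw [h1]
      have expand : (M - Q * M) * (Mᴴ - Mᴴ * Q)
          = (M * Mᴴ) - (M * Mᴴ) * Q - Q * (M * Mᴴ) + Q * ((M * Mᴴ) * Q) := by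
        noncomm_ring
      rw [expand, hAQ, hQA]
      abel
    have h2 := self_mul_conjTranspose_eq_zero.mp hNN
    exact (sub_eq_zero.mp h2).symm
  -- range equalities
  have hrQM : LinearMap.range Q.mulVecLin ≤ LinearMap.range M.mulVecLin := by
    rw [hQdef, Matrix.mul_assoc, Matrix.mulVecLin_mul]
    exact LinearMap.range_comp_le_range _ _
  have hrMQ : LinearMap.range M.mulVecLin ≤ LinearMap.range Q.mulVecLin := by
    rw [← hQM, Matrix.mulVecLin_mul]
    exact LinearMap.range_comp_le_range _ _
  have hPQ : P * Q = Q := myIdemAbsorb hPidem (by rw [hPrange]; exact hrQM)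
  have hQP : Q * P = P := myIdemAbsorb hQidem (by rw [hPrange]; exact hrMQ)
  have hQeqP : Q = P := by
    have h2 : P * Q = P := by
      have := congrArg conjTranspose hQP
      rwa [conjTranspose_mul, hQher, hPher] at this
    rw [← hPQ, h2]
  -- the unnormalized state
  obtain ⟨C, hCdef⟩ : ∃ C, C = B * M := ⟨_, rfl⟩
  have hCH : Cᴴ = Mᴴ * B := by rw [hCdef, conjTranspose_mul, hBher]
  obtain ⟨ρ₀, hρ₀def⟩ : ∃ X, X = Cᴴ * ρ * C := ⟨_, rfl⟩
  have hpsd0 : ρ₀.PosSemidef := by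
    rw [hρ₀def]; exact hρ.conjTranspose_mul_mul_same C
  have hPACH : PA * Cᴴ = Q := by
    rw [hCH, ← Matrix.mul_assoc, hPAMH, ← hQdef]
  have hCPA : C * PA = Q := by
    have hBA : B * (M * Mᴴ) = Q := by
      have := congrArg conjTranspose hQdef
      rw [conjTranspose_mul, hBher, hA.eq, hQher] at this
      exact this.symm
    rw [hCdef, Matrix.mul_assoc, hMPA, hBA]
  have hρP : ρ * P = ρ := by
    have := congrArg conjTranspose hPρ
    rwa [conjTranspose_mul, hρ.1.eq, hPher] at this
  have hkey : PA * ρ₀ * PA = ρ := by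
    rw [hρ₀def]
    calc PA * (Cᴴ * ρ * C) * PA = (PA * Cᴴ) * ρ * (C * PA) := by
          simp only [Matrix.mul_assoc]
      _ = P * ρ * P := by rw [hPACH, hCPA, hQeqP]
      _ = ρ := by rw [hPρ, hρP]
  have hPBkey : PB * ρ₀ * PB = ρ₀ := by
    rw [hρ₀def]
    have h1 : PB * Cᴴ = Cᴴ := by
      rw [hCH, hMH, ← Matrix.mul_assoc, ← Matrix.mul_assoc, hPBidem]
    have h2 : C * PB = C := by
      rw [hCdef, hMdef, Matrix.mul_assoc, Matrix.mul_assoc, hPBidem]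
    calc PB * (Cᴴ * ρ * C) * PB = (PB * Cᴴ) * ρ * (C * PB) := by
          simp only [Matrix.mul_assoc]
      _ = Cᴴ * ρ * C := by rw [h1, h2]
  -- the trace of ρ₀ is a positive real
  obtain ⟨t, htdef⟩ : ∃ t, t = ρ₀.trace := ⟨_, rfl⟩
  have h0t : 0 ≤ t := by
    rw [htdef, Matrix.trace]
    exact Finset.sum_nonneg fun i _ => myDiagNonneg hpsd0 i
  have hne : t ≠ 0 := by
    intro h0
    obtain ⟨S, hSH, hSS⟩ : ∃ S : Matrix (Fin n) (Fin n) ℂ, Sᴴ = S ∧ S * S = ρ := by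
      open scoped MatrixOrder in
      exact ⟨CFC.sqrt ρ, (CFC.sqrt_nonneg ρ).posSemidef.1.eq, CFC.sqrt_mul_sqrt_self ρ hρ.nonneg⟩
    have hYY : (S * C)ᴴ * (S * C) = ρ₀ := by
      rw [conjTranspose_mul, hSH, hρ₀def]
      calc Cᴴ * S * (S * C) = Cᴴ * (S * S) * C := by
            simp only [Matrix.mul_assoc]
        _ = Cᴴ * ρ * C := by rw [hSS]
    have hY0 : S * C = 0 := myTraceZero (by rw [hYY, ← htdef]; exact h0)
    have hρ₀0 : ρ₀ = 0 := by rw [← hYY, hY0]; simp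
    rw [hρ₀0] at hkey
    simp only [Matrix.mul_zero, Matrix.zero_mul] at hkey
    rw [← hkey] at hρtr
    simp at hρtr
  have hpos : 0 < t := lt_of_le_of_ne h0t (Ne.symm hne)
  obtain ⟨hre, him⟩ := Complex.lt_def.mp hpos
  simp only [Complex.zero_re, Complex.zero_im] at hre him
  have htr_eq : t = ((t.re : ℝ) : ℂ) := by
    apply Complex.ext <;> simp [← him]
  obtain ⟨r, hrpos, hrt⟩ : ∃ r : ℝ, 0 < r ∧ t = (r : ℂ) := ⟨t.re, hre, htr_eq⟩
  obtain ⟨c, hcdef⟩ : ∃ c : ℂ, c = ((r⁻¹ : ℝ) : ℂ) := ⟨_, rfl⟩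
  have hc0 : 0 ≤ c := by
    rw [hcdef, Complex.le_def]
    constructor <;> simp [inv_nonneg.mpr hrpos.le]
  have hcstar : star c = c := by rw [hcdef, Complex.star_def, Complex.conj_ofReal]
  have hct : c * t = 1 := by
    rw [hcdef, hrt, ← Complex.ofReal_mul, inv_mul_cancel₀ hrpos.ne']
    simp
  have htrPA : (PA * (c • ρ₀)).trace = c := by
    rw [Matrix.mul_smul, trace_smul, smul_eq_mul]
    have h1 : (PA * ρ₀).trace = 1 := by
      calc (PA * ρ₀).trace = ((PA * PA) * ρ₀).trace := by rw [hPAidem]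
        _ = ((PA * ρ₀) * PA).trace := by
              rw [Matrix.mul_assoc]; exact trace_mul_comm _ _
        _ = ρ.trace := by rw [hkey]
        _ = 1 := hρtr
    rw [h1, mul_one]
  refine ⟨c • ρ₀, ?_, ?_, ?_, ?_, ?_⟩
  · exact hpsd0.smul hc0
  · rw [trace_smul, smul_eq_mul, ← htdef, hct]
  · rw [Matrix.mul_smul, Matrix.smul_mul, hPBkey]
  · rw [htrPA, hcdef]
    simpa using inv_pos.mpr hrpos
  · rw [htrPA, Matrix.mul_smul, Matrix.smul_mul, hkey]
end

section
/- Let H be a finite-dimensional complex inner product space, let Π_A and Π_B be orthogonal projections on H, and suppose we are given a finite family (S_j)_{j∈J} of pairwise orthogonal subspaces of H whose sum is all of H, each invariant under both Π_A and Π_B, together with real numbers p_j ≥ 0 such that Π_B Π_A Π_B x = p_j • (Π_B x) for every j and every x ∈ S_j. Let Π_j denote the orthogonal projection onto S_j. Let p ≥ 0 be a real number and let σ be a density operator on H with Tr(Π_B σ) = 1 such that Tr(Π_j σ) = 0 for every j with p_j < p. Then Tr(Π_A σ) ≥ p. -/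
local notation "⟪" x ", " y "⟫" => @inner ℂ _ _ x y

variable {H : Type} [NormedAddCommGroup H] [InnerProductSpace ℂ H]

lemma myTrace_eq_sum_inner [FiniteDimensional ℂ H] {ι : Type} [Fintype ι] [DecidableEq ι]
    (b : OrthonormalBasis ι ℂ H) (T : H →ₗ[ℂ] H) :
    LinearMap.trace ℂ H T = ∑ i, ⟪b i, T (b i)⟫ := by
  rw [LinearMap.trace_eq_matrix_trace ℂ b.toBasis, Matrix.trace]
  simp [Matrix.diag, LinearMap.toMatrix_apply, OrthonormalBasis.coe_toBasis_repr_apply,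
    OrthonormalBasis.repr_apply_apply, OrthonormalBasis.coe_toBasis]

lemma myPSD_trace_re_nonneg [FiniteDimensional ℂ H] {T : H →ₗ[ℂ] H}
    (hpsd : ∀ x : H, 0 ≤ (⟪x, T x⟫).re) : 0 ≤ (LinearMap.trace ℂ H T).re := by
  rw [myTrace_eq_sum_inner (stdOrthonormalBasis ℂ H) T, Complex.re_sum]
  exact Finset.sum_nonneg fun i _ => hpsd _

lemma myPSD_eigenvalues_nonneg [FiniteDimensional ℂ H] {T : H →ₗ[ℂ] H}
    (hsym : T.IsSymmetric) (hpsd : ∀ x : H, 0 ≤ (⟪x, T x⟫).re) (i : Fin (Module.finrank ℂ H)) :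
    0 ≤ hsym.eigenvalues rfl i := by
  set b := hsym.eigenvectorBasis rfl
  have h1 : ⟪b i, b i⟫ = 1 := by simpa using orthonormal_iff_ite.mp b.orthonormal i i
  have h2 : ⟪b i, T (b i)⟫ = (hsym.eigenvalues rfl i : ℂ) := by
    rw [hsym.apply_eigenvectorBasis rfl i, inner_smul_right, h1, mul_one]
    norm_cast
    
  have := hpsd (b i)
  rw [h2] at this
  simpa using this

lemma myPSD_eq_zero_of_trace [FiniteDimensional ℂ H] {T : H →ₗ[ℂ] H}
    (hsym : T.IsSymmetric) (hpsd : ∀ x : H, 0 ≤ (⟪x, T x⟫).re)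
    (htr : (LinearMap.trace ℂ H T).re = 0) : T = 0 := by
  set b := hsym.eigenvectorBasis rfl with hb
  have h2 : ∀ i, ⟪b i, T (b i)⟫ = (hsym.eigenvalues rfl i : ℂ) := by
    intro i
    have h1 : ⟪b i, b i⟫ = 1 := by simpa using orthonormal_iff_ite.mp b.orthonormal i i
    rw [hsym.apply_eigenvectorBasis rfl i, inner_smul_right, h1, mul_one]
    norm_cast
  have htr' : ∑ i, hsym.eigenvalues rfl i = 0 := by
    rw [myTrace_eq_sum_inner b T] at htr
    rw [Complex.re_sum] at htr
    simpa [h2] using htr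
  have hzero : ∀ i, hsym.eigenvalues rfl i = 0 := by
    intro i
    have := (Finset.sum_eq_zero_iff_of_nonneg (fun i _ => myPSD_eigenvalues_nonneg hsym hpsd i)).mp htr' i (Finset.mem_univ i)
    exact this
  apply b.toBasis.ext
  intro i
  simp only [OrthonormalBasis.coe_toBasis, LinearMap.zero_apply]
  rw [hsym.apply_eigenvectorBasis rfl i, hzero i]
  simp

lemma myPSD_apply_eq_zero [FiniteDimensional ℂ H] {T : H →ₗ[ℂ] H}
    (hsym : T.IsSymmetric) (hpsd : ∀ x : H, 0 ≤ (⟪x, T x⟫).re)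
    {y : H} (hy : (⟪y, T y⟫).re = 0) : T y = 0 := by
  set b := hsym.eigenvectorBasis rfl with hb
  set μ := hsym.eigenvalues rfl with hμ
  set c : Fin (Module.finrank ℂ H) → ℂ := fun i => b.repr y i with hc
  have hrepr : ∀ i, b.repr (T y) i = (μ i : ℂ) * c i := fun i =>
    hsym.eigenvectorBasis_apply_self_apply rfl y i
  have hinner : ⟪y, T y⟫ = ∑ i, (starRingEnd ℂ) (c i) * ((μ i : ℂ) * c i) := by
    rw [← b.repr.inner_map_map y (T y), PiLp.inner_apply]
    simp [hrepr, RCLike.inner_apply]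
    exact Finset.sum_congr rfl fun i _ => by simp only [hc]; ring
  have hre : (⟪y, T y⟫).re = ∑ i, μ i * Complex.normSq (c i) := by
    rw [hinner, Complex.re_sum]
    congr 1; ext i
    have : (starRingEnd ℂ) (c i) * ((μ i : ℂ) * c i) = (μ i : ℂ) * ((starRingEnd ℂ) (c i) * c i) := by ring
    rw [this, ← Complex.normSq_eq_conj_mul_self, ← Complex.ofReal_mul, Complex.ofReal_re]
  have hterm : ∀ i ∈ Finset.univ, (0:ℝ) ≤ μ i * Complex.normSq (c i) := fun i _ =>
    mul_nonneg (myPSD_eigenvalues_nonneg hsym hpsd i) (Complex.normSq_nonneg _)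
  have hzero : ∀ i, μ i * Complex.normSq (c i) = 0 := by
    intro i
    exact (Finset.sum_eq_zero_iff_of_nonneg hterm).mp (by rw [← hre, hy]) i (Finset.mem_univ i)
  have hzc : ∀ i, (μ i : ℂ) * c i = 0 := by
    intro i
    by_cases h : c i = 0
    · rw [h, mul_zero]
    · have : μ i = 0 := by
        have hns : Complex.normSq (c i) ≠ 0 := fun hh => h (Complex.normSq_eq_zero.mp hh)
        exact (mul_eq_zero.mp (hzero i)).resolve_right hns
      rw [this]; simp
  have : b.repr (T y) = 0 := by
    ext i
    rw [hrepr i, hzc i]; rfl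
  exact b.repr.map_eq_zero_iff.mp this

lemma myEq_of_iSup {J : Type} (S : J → Submodule ℂ H) (hsup : iSup S = ⊤)
    (f g : H →ₗ[ℂ] H) (h : ∀ j, ∀ x ∈ S j, f x = g x) : f = g := by
  ext x
  have h1 : iSup S ≤ LinearMap.eqLocus f g := iSup_le fun j x hx => h j x hx
  exact h1 (hsup ▸ Submodule.mem_top)

lemma myTrace_comp_comm [FiniteDimensional ℂ H] (f g : H →ₗ[ℂ] H) :
    LinearMap.trace ℂ H (f ∘ₗ g) = LinearMap.trace ℂ H (g ∘ₗ f) :=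
  LinearMap.trace_mul_comm ℂ f g

lemma mySum_comp {J : Type} [Fintype J] (f : J → (H →ₗ[ℂ] H)) (g : H →ₗ[ℂ] H) :
    (∑ j, f j) ∘ₗ g = ∑ j, (f j) ∘ₗ g := by
  ext x
  simp [LinearMap.sum_apply]

/-- `T` is a positive semidefinite (symmetric) endomorphism of `H`. -/
def IsPSD (T : H →ₗ[ℂ] H) : Prop :=
  T.IsSymmetric ∧ ∀ x : H, 0 ≤ (⟪x, T x⟫).re

/-- `ρ` is a density operator on `H`: positive semidefinite, self-adjoint, trace one. -/
def IsDensityOp [FiniteDimensional ℂ H] (ρ : H →ₗ[ℂ] H) : Prop :=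
  IsPSD ρ ∧ LinearMap.trace ℂ H ρ = 1

/-- `P` is the orthogonal projection of `H` onto the subspace `S`. -/
def IsOrthProjOnto (S : Submodule ℂ H) (P : H →ₗ[ℂ] H) : Prop :=
  P.IsSymmetric ∧ (∀ x ∈ S, P x = x) ∧ ∀ x : H, P x ∈ S

/-- **States supported on Jordan subspaces of value at least `p` succeed with
probability at least `p`.**
Given orthogonal projections `PA, PB` on a finite-dimensional complex inner product
space, a family of pairwise-orthogonal jointly invariant subspaces `S j` spanning `H`
with values `p j ≥ 0` satisfying `PB PA PB x = p j • PB x` on `S j`, orthogonal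
projections `Pj j` onto `S j`, and a density operator `σ` with `Tr(PB σ) = 1` and
`Tr(Pj j σ) = 0` whenever `p j < p`, one has `Tr(PA σ) ≥ p`. -/
theorem trace_PA_ge_of_supported_on_large_jordan_subspaces [FiniteDimensional ℂ H]
    (PA PB : H →ₗ[ℂ] H)
    (hPAsym : PA.IsSymmetric) (hPAidem : PA ∘ₗ PA = PA)
    (hPBsym : PB.IsSymmetric) (hPBidem : PB ∘ₗ PB = PB)
    {J : Type} [Fintype J] (S : J → Submodule ℂ H)
    (horth : ∀ j j', j ≠ j' → ∀ x ∈ S j, ∀ y ∈ S j', ⟪x, y⟫ = 0)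
    (hsup : iSup S = ⊤)
    (hinvA : ∀ j, ∀ x ∈ S j, PA x ∈ S j)
    (hinvB : ∀ j, ∀ x ∈ S j, PB x ∈ S j)
    (pj : J → ℝ) (hpj0 : ∀ j, 0 ≤ pj j)
    (hBAB : ∀ j, ∀ x ∈ S j, PB (PA (PB x)) = (pj j : ℂ) • PB x)
    (Pj : J → (H →ₗ[ℂ] H)) (hPj : ∀ j, IsOrthProjOnto (S j) (Pj j))
    (p : ℝ) (hp : 0 ≤ p)
    (σ : H →ₗ[ℂ] H) (hσ : IsDensityOp σ)
    (hσB : LinearMap.trace ℂ H (PB ∘ₗ σ) = 1)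
    (hsupp : ∀ j, pj j < p → LinearMap.trace ℂ H (Pj j ∘ₗ σ) = 0) :
    p ≤ (LinearMap.trace ℂ H (PA ∘ₗ σ)).re := by
  classical
  obtain ⟨⟨σsym, σpsd⟩, htrσ⟩ := hσ
  -- Pj kills other subspaces
  have hPjzero : ∀ j k, j ≠ k → ∀ x ∈ S k, Pj j x = 0 := by
    intro j k hne x hx
    have hall : ∀ y : H, ⟪y, Pj j x⟫ = 0 := by
      intro y
      rw [← (hPj j).1 y x]
      exact horth j k hne _ ((hPj j).2.2 y) x hx
    have := hall (Pj j x)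
    exact inner_self_eq_zero.mp this
  -- Pj idempotent
  have hPjidem : ∀ j, Pj j ∘ₗ Pj j = Pj j := by
    intro j; ext x
    exact (hPj j).2.1 (Pj j x) ((hPj j).2.2 x)
  -- sum of Pj is identity
  have hsumPj : (∑ j, Pj j) = LinearMap.id (R := ℂ) (M := H) := by
    apply myEq_of_iSup S hsup
    intro k x hx
    rw [LinearMap.sum_apply, LinearMap.id_apply,
      Finset.sum_eq_single k (fun j _ hne => hPjzero j k hne x hx) (by simp)]
    exact (hPj k).2.1 x hx
  -- PB PA PB as a sum
  have hBABsum : PB ∘ₗ (PA ∘ₗ PB) = ∑ j, (pj j : ℂ) • (PB ∘ₗ Pj j) := by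
    apply myEq_of_iSup S hsup
    intro k x hx
    have lhs : (PB ∘ₗ (PA ∘ₗ PB)) x = (pj k : ℂ) • PB x := hBAB k x hx
    rw [lhs, LinearMap.sum_apply,
      Finset.sum_eq_single k
        (fun j _ hne => by simp [hPjzero j k hne x hx])
        (by simp)]
    simp [(hPj k).2.1 x hx]
  -- Q := id - PB
  set Q : H →ₗ[ℂ] H := LinearMap.id - PB with hQ
  have hQapp : ∀ x : H, Q x = x - PB x := fun x => rfl
  have hQsym : Q.IsSymmetric := by
    intro x y
    simp only [hQapp, inner_sub_left, inner_sub_right, hPBsym x y]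
  have hPBPBapp : ∀ x : H, PB (PB x) = PB x := fun x => LinearMap.ext_iff.mp hPBidem x
  have hQidem : Q ∘ₗ Q = Q := by
    ext x
    simp only [LinearMap.comp_apply, hQapp, map_sub, hPBPBapp]
    abel
  -- M := Q σ Q
  set M : H →ₗ[ℂ] H := Q ∘ₗ (σ ∘ₗ Q) with hM
  have hMapp : ∀ x : H, M x = Q (σ (Q x)) := fun x => rfl
  have hMsym : M.IsSymmetric := by
    intro x y
    rw [hMapp, hMapp, hQsym (σ (Q x)) y, σsym (Q x) (Q y), hQsym x (σ (Q y))]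
  have hMpsd : ∀ x : H, 0 ≤ (⟪x, M x⟫).re := by
    intro x
    rw [hMapp, ← hQsym x (σ (Q x))]
    exact σpsd (Q x)
  have htrM : (LinearMap.trace ℂ H M).re = 0 := by
    have e1 : LinearMap.trace ℂ H M = LinearMap.trace ℂ H (σ ∘ₗ Q) := by
      rw [hM, myTrace_comp_comm Q (σ ∘ₗ Q)]
      rw [show (σ ∘ₗ Q) ∘ₗ Q = σ ∘ₗ (Q ∘ₗ Q) from rfl, hQidem]
    have e2 : LinearMap.trace ℂ H (σ ∘ₗ Q) = LinearMap.trace ℂ H (Q ∘ₗ σ) :=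
      myTrace_comp_comm σ Q
    have e3 : Q ∘ₗ σ = σ - PB ∘ₗ σ := by ext x; simp [hQapp]
    rw [e1, e2, e3, map_sub, htrσ, hσB]
    simp
  have hMzero : M = 0 := myPSD_eq_zero_of_trace hMsym hMpsd htrM
  -- σ Q = 0 and PB σ = σ, σ PB = σ
  have hσQ : ∀ x : H, σ (Q x) = 0 := by
    intro x
    apply myPSD_apply_eq_zero σsym σpsd
    have e : ⟪Q x, σ (Q x)⟫ = ⟪x, M x⟫ := hQsym x (σ (Q x))
    rw [e, hMzero]
    simp
  have hσPB : σ ∘ₗ PB = σ := by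
    ext x
    have := hσQ x
    rw [hQapp, map_sub, sub_eq_zero] at this
    exact this.symm
  have hσPBapp : ∀ x : H, σ (PB x) = σ x := fun x => LinearMap.ext_iff.mp hσPB x
  have hPBσ : PB ∘ₗ σ = σ := by
    ext x
    have hall : ∀ y : H, ⟪PB (σ x) - σ x, y⟫ = 0 := by
      intro y
      rw [inner_sub_left, hPBsym (σ x) y, σsym x (PB y), hσPBapp y, ← σsym x y, sub_self]
    simpa [LinearMap.comp_apply] using sub_eq_zero.mp (inner_self_eq_zero.mp (hall (PB (σ x) - σ x)))
  have hPBσapp : ∀ x : H, PB (σ x) = σ x := fun x => LinearMap.ext_iff.mp hPBσ x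
  -- main trace identity
  have key : LinearMap.trace ℂ H (PA ∘ₗ σ) = ∑ j, (pj j : ℂ) * LinearMap.trace ℂ H (Pj j ∘ₗ σ) := by
    have e0 : PA ∘ₗ σ = ((PA ∘ₗ PB) ∘ₗ σ) ∘ₗ PB := by
      rw [show ((PA ∘ₗ PB) ∘ₗ σ) ∘ₗ PB = PA ∘ₗ (PB ∘ₗ (σ ∘ₗ PB)) from rfl, hσPB, hPBσ]
    have step : ∀ j, LinearMap.trace ℂ H ((PB ∘ₗ Pj j) ∘ₗ σ) = LinearMap.trace ℂ H (Pj j ∘ₗ σ) := by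
      intro j
      calc LinearMap.trace ℂ H ((PB ∘ₗ Pj j) ∘ₗ σ)
          = LinearMap.trace ℂ H (Pj j ∘ₗ (σ ∘ₗ PB)) := myTrace_comp_comm PB (Pj j ∘ₗ σ)
        _ = LinearMap.trace ℂ H (Pj j ∘ₗ σ) := by rw [hσPB]
    calc LinearMap.trace ℂ H (PA ∘ₗ σ)
        = LinearMap.trace ℂ H (((PA ∘ₗ PB) ∘ₗ σ) ∘ₗ PB) := by rw [← e0]
      _ = LinearMap.trace ℂ H ((PB ∘ₗ (PA ∘ₗ PB)) ∘ₗ σ) := myTrace_comp_comm _ _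
      _ = LinearMap.trace ℂ H ((∑ j, (pj j : ℂ) • (PB ∘ₗ Pj j)) ∘ₗ σ) := by rw [hBABsum]
      _ = ∑ j, (pj j : ℂ) * LinearMap.trace ℂ H ((PB ∘ₗ Pj j) ∘ₗ σ) := by
          rw [mySum_comp, map_sum]
          congr 1; ext j
          rw [LinearMap.smul_comp, map_smul, smul_eq_mul]
      _ = ∑ j, (pj j : ℂ) * LinearMap.trace ℂ H (Pj j ∘ₗ σ) := by
          congr 1; ext j; rw [step j]
  -- each t j nonneg
  set t : J → ℝ := fun j => (LinearMap.trace ℂ H (Pj j ∘ₗ σ)).re with ht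
  have htj0 : ∀ j, 0 ≤ t j := by
    intro j
    have e1 : LinearMap.trace ℂ H (Pj j ∘ₗ σ) = LinearMap.trace ℂ H (Pj j ∘ₗ (σ ∘ₗ Pj j)) := by
      calc LinearMap.trace ℂ H (Pj j ∘ₗ σ)
          = LinearMap.trace ℂ H ((Pj j ∘ₗ Pj j) ∘ₗ σ) := by rw [hPjidem j]
        _ = LinearMap.trace ℂ H (Pj j ∘ₗ (σ ∘ₗ Pj j)) := myTrace_comp_comm (Pj j) (Pj j ∘ₗ σ)
    rw [ht]; simp only [e1]
    apply myPSD_trace_re_nonneg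
    intro x
    have e2 : ⟪x, (Pj j ∘ₗ (σ ∘ₗ Pj j)) x⟫ = ⟪Pj j x, σ (Pj j x)⟫ :=
      ((hPj j).1 x (σ (Pj j x))).symm
    rw [e2]
    exact σpsd (Pj j x)
  -- sum of t j = 1
  have hsum1 : ∑ j, t j = 1 := by
    have e1 : ∑ j, LinearMap.trace ℂ H (Pj j ∘ₗ σ) = 1 := by
      rw [← map_sum, ← mySum_comp, hsumPj, LinearMap.id_comp, htrσ]
    have := congrArg Complex.re e1
    rw [Complex.re_sum] at this
    simpa using this
  -- conclude
  have keyre : (LinearMap.trace ℂ H (PA ∘ₗ σ)).re = ∑ j, pj j * t j := by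
    rw [key, Complex.re_sum]
    congr 1; ext j
    simp [Complex.re_ofReal_mul, ht]
  rw [keyre]
  calc p = ∑ j, p * t j := by rw [← Finset.mul_sum, hsum1, mul_one]
    _ ≤ ∑ j, pj j * t j := by
        apply Finset.sum_le_sum
        intro j _
        by_cases hlt : pj j < p
        · have : t j = 0 := by rw [ht]; simp [hsupp j hlt]
          rw [this, mul_zero, mul_zero]
        · exact mul_le_mul_of_nonneg_right (not_lt.mp hlt) (htj0 j)
end

section
/- Let Π_A and Π_B be orthogonal projections on ℂⁿ and let ρ be an n×n positive semidefinite matrix with Π_A ρ = ρ. Then (Tr(Π_B ρ))² ≤ Tr(Π_A Π_B ρ Π_B) · Tr(ρ), where all three traces are nonnegative real numbers. -/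
open Matrix
open scoped ComplexOrder
open scoped MatrixOrder

private def toE {n : ℕ} (A : Matrix (Fin n) (Fin n) ℂ) :
    EuclideanSpace ℂ (Fin n × Fin n) := WithLp.toLp 2 (fun p : Fin n × Fin n => A p.1 p.2)

private lemma inner_toE {n : ℕ} (A B : Matrix (Fin n) (Fin n) ℂ) :
    (inner ℂ (toE A) (toE B) : ℂ) = (Aᴴ * B).trace := by
  simp only [PiLp.inner_apply, RCLike.inner_apply, toE, PiLp.toLp_apply, Matrix.trace, Matrix.diag,
    Matrix.mul_apply, Matrix.conjTranspose_apply]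
  rw [Fintype.sum_prod_type]
  exact Finset.sum_comm.trans (Finset.sum_congr rfl fun _ _ => Finset.sum_congr rfl fun _ _ => mul_comm _ _)

/-- **Cauchy–Schwarz trace inequality.**
If `PA`, `PB` are orthogonal projections on `ℂⁿ` and `ρ` is a positive semidefinite
matrix with `PA * ρ = ρ`, then `(Tr(PB ρ))² ≤ Tr(PA PB ρ PB) · Tr(ρ)`. -/
theorem trace_cauchy_schwarz {n : ℕ}
    (PA PB ρ : Matrix (Fin n) (Fin n) ℂ)
    (hPAher : PAᴴ = PA) (hPAidem : PA * PA = PA)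
    (hPBher : PBᴴ = PB) (hPBidem : PB * PB = PB)
    (hρ : ρ.PosSemidef) (hsupp : PA * ρ = ρ) :
    ((PB * ρ).trace).re ^ 2 ≤ ((PA * PB * ρ * PB).trace).re * (ρ.trace).re := by
  set σ := CFC.sqrt ρ with hσdef
  have hσher : σᴴ = σ := (CFC.sqrt_nonneg ρ).posSemidef.isHermitian
  have hσσ : σ * σ = ρ := CFC.sqrt_mul_sqrt_self ρ hρ.nonneg
  -- `PA * σ = σ`
  have hPAσ : PA * σ = σ := by
    have h0 : (1 - PA) * ρ = 0 := by rw [Matrix.sub_mul, Matrix.one_mul, hsupp, sub_self]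
    have h1 : ((1 - PA) * σ) * ((1 - PA) * σ)ᴴ = 0 := by
      rw [Matrix.conjTranspose_mul, hσher, ← Matrix.mul_assoc, Matrix.mul_assoc (1 - PA) σ σ,
        hσσ, h0, Matrix.zero_mul]
    have h2 : (1 - PA) * σ = 0 := Matrix.self_mul_conjTranspose_eq_zero.mp h1
    rw [Matrix.sub_mul, Matrix.one_mul] at h2
    exact (sub_eq_zero.mp h2).symm
  have hσPA : σ * PA = σ := by
    calc σ * PA = (PA * σ)ᴴ := by rw [Matrix.conjTranspose_mul, hPAher, hσher]
    _ = σ := by rw [hPAσ, hσher]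
  set Y := PA * PB * σ with hY
  -- trace identities
  have key1 : (PB * ρ).trace = inner ℂ (toE σ) (toE Y) := by
    rw [inner_toE, hσher, hY]
    calc (PB * ρ).trace = ((PB * σ) * σ).trace := by
          congr 1; rw [← hσσ, Matrix.mul_assoc]
    _ = (σ * (PB * σ)).trace := Matrix.trace_mul_comm _ _
    _ = (σ * (PA * PB * σ)).trace := by
          congr 1
          rw [show σ * (PA * PB * σ) = (σ * PA) * (PB * σ) from by noncomm_ring, hσPA]
  have key2 : (PA * PB * ρ * PB).trace = inner ℂ (toE Y) (toE Y) := by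
    rw [inner_toE, hY, Matrix.conjTranspose_mul, Matrix.conjTranspose_mul, hPAher, hPBher, hσher]
    calc (PA * PB * ρ * PB).trace
        = (PB * (PA * PB * ρ)).trace := Matrix.trace_mul_comm _ _
    _ = ((PB * PA * PB * σ) * σ).trace := by
          congr 1; rw [← hσσ]; noncomm_ring
    _ = (σ * (PB * PA * PB * σ)).trace := Matrix.trace_mul_comm _ _
    _ = (σ * (PB * PA) * (PA * PB * σ)).trace := by
          congr 1
          rw [show σ * (PB * PA) * (PA * PB * σ) = σ * (PB * ((PA * PA) * PB) * σ) from by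
            noncomm_ring, hPAidem]
          noncomm_ring
  have key3 : ρ.trace = inner ℂ (toE σ) (toE σ) := by rw [inner_toE, hσher, hσσ]
  rw [key1, key2, key3]
  set z : ℂ := inner ℂ (toE σ) (toE Y) with hz
  have hcs : ‖z‖ ≤ ‖toE σ‖ * ‖toE Y‖ := norm_inner_le_norm _ _
  have hσn : (inner ℂ (toE σ) (toE σ) : ℂ).re = ‖toE σ‖ ^ 2 := by
    have := inner_self_eq_norm_sq (𝕜 := ℂ) (toE σ)
    rwa [RCLike.re_to_complex] at this
  have hYn : (inner ℂ (toE Y) (toE Y) : ℂ).re = ‖toE Y‖ ^ 2 := by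
    have := inner_self_eq_norm_sq (𝕜 := ℂ) (toE Y)
    rwa [RCLike.re_to_complex] at this
  rw [hσn, hYn]
  have hzn : ‖z‖ ^ 2 = z.re ^ 2 + z.im ^ 2 := by
    rw [Complex.sq_norm, Complex.normSq_apply]; ring
  nlinarith [hcs, hzn, sq_nonneg z.im, norm_nonneg z, norm_nonneg (toE σ), norm_nonneg (toE Y)]
end

section
/- Let R be a finite set and k a positive integer with |R| ≥ k. If r₁, …, r_{k²} are independent uniformly random elements of R (i.e., the tuple (r₁,…,r_{k²}) is drawn uniformly from the set of all functions from {1,…,k²} to R), then the probability that the set {r₁, …, r_{k²}} contains fewer than k distinct elements is at most k · ((k−1)/k)^{k²}. -/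
-- real step inequality
lemma step_real (k n : ℕ) (hk : 1 ≤ k) (h : k ≤ n) :
    (n:ℝ)^(k^2) * ((n:ℝ)+1) ≤ ((n:ℝ)+1)^(k^2) * ((n:ℝ)+2-(k:ℝ)) := by
  have hn1 : (1:ℝ) ≤ (n:ℝ) := by exact_mod_cast le_trans hk h
  have hn0 : (0:ℝ) < (n:ℝ) := by linarith
  have hkn : (k:ℝ) ≤ (n:ℝ) := by exact_mod_cast h
  have hk1 : (1:ℝ) ≤ (k:ℝ) := by exact_mod_cast hk
  set m := k^2 with hm
  have hmk : (m:ℝ) = (k:ℝ)^2 := by rw [hm]; push_cast; ring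
  have hinv : (-2:ℝ) ≤ 1/(n:ℝ) := by
    have : (0:ℝ) ≤ 1/(n:ℝ) := by positivity
    linarith
  have hbern0 : 1 + (m:ℝ) * (1/(n:ℝ)) ≤ (1 + 1/(n:ℝ))^m :=
    one_add_mul_le_pow hinv m
  have hpow : ((n:ℝ)+1)^m * (n:ℝ) ≥ (n:ℝ)^m * ((n:ℝ) + (m:ℝ)) := by
    have h1 : ((n:ℝ)+1)^m = (1 + 1/(n:ℝ))^m * (n:ℝ)^m := by
      rw [← mul_pow]; congr 1; field_simp
    rw [h1]
    have := mul_le_mul_of_nonneg_right hbern0 (by positivity : (0:ℝ) ≤ (n:ℝ)^m * (n:ℝ))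
    calc (n:ℝ)^m * ((n:ℝ) + (m:ℝ)) = (1 + (m:ℝ)*(1/(n:ℝ))) * ((n:ℝ)^m * (n:ℝ)) := by
          field_simp
      _ ≤ (1+1/(n:ℝ))^m * ((n:ℝ)^m * (n:ℝ)) := this
      _ = (1+1/(n:ℝ))^m * (n:ℝ)^m * (n:ℝ) := by ring
  -- suffices after multiplying by n > 0
  rw [← mul_le_mul_iff_of_pos_right hn0]
  have hkey : (n:ℝ)*((n:ℝ)+1) ≤ ((n:ℝ)+(m:ℝ)) * ((n:ℝ)+2-(k:ℝ)) := by
    rw [hmk]; nlinarith [mul_nonneg (sub_nonneg.2 hkn) (by nlinarith : (0:ℝ) ≤ (k:ℝ)^2 - (k:ℝ))]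
  have hc : (0:ℝ) ≤ (n:ℝ)+2-(k:ℝ) := by linarith
  have hA : (0:ℝ) < (n:ℝ)^m := by positivity
  calc (n:ℝ)^m * ((n:ℝ)+1) * (n:ℝ) = (n:ℝ)^m * ((n:ℝ)*((n:ℝ)+1)) := by ring
    _ ≤ (n:ℝ)^m * (((n:ℝ)+(m:ℝ)) * ((n:ℝ)+2-(k:ℝ))) := by
        exact mul_le_mul_of_nonneg_left hkey hA.le
    _ = ((n:ℝ)^m * ((n:ℝ)+(m:ℝ))) * ((n:ℝ)+2-(k:ℝ)) := by ring
    _ ≤ (((n:ℝ)+1)^m * (n:ℝ)) * ((n:ℝ)+2-(k:ℝ)) := mul_le_mul_of_nonneg_right hpow hc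
    _ = ((n:ℝ)+1)^m * ((n:ℝ)+2-(k:ℝ)) * (n:ℝ) := by ring

lemma key_nat (k n : ℕ) (hk : 1 ≤ k) (h : k ≤ n) :
    n.choose (k-1) * k^(k^2) ≤ k * n^(k^2) := by
  induction n, h using Nat.le_induction with
  | base =>
      have hc : k.choose (k-1) = k := by
        rw [← Nat.choose_symm (Nat.sub_le k 1), Nat.sub_sub_self hk, Nat.choose_one_right]
      rw [hc]
  | succ n hn ih =>
      have hk1n : k - 1 ≤ n + 1 := by omega
      have hpos : 0 < n + 1 - (k-1) := by omega
      apply Nat.le_of_mul_le_mul_right _ hpos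
      have hid : (n+1).choose (k-1) * (n + 1 - (k-1)) = n.choose (k-1) * (n+1) :=
        (Nat.choose_mul_succ_eq n (k-1)).symm
      have h1 : (n+1).choose (k-1) * k^(k^2) * (n+1-(k-1)) ≤ k * n^(k^2) * (n+1) := by
        calc (n+1).choose (k-1) * k^(k^2) * (n+1-(k-1))
            = ((n+1).choose (k-1) * (n+1-(k-1))) * k^(k^2) := by ring
          _ = n.choose (k-1) * (n+1) * k^(k^2) := by rw [hid]
          _ = (n.choose (k-1) * k^(k^2)) * (n+1) := by ring
          _ ≤ (k * n^(k^2)) * (n+1) := Nat.mul_le_mul_right _ ih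
          _ = k * n^(k^2) * (n+1) := rfl
      refine h1.trans ?_
      -- k * n^(k^2) * (n+1) ≤ k * (n+1)^(k^2) * (n+1-(k-1)) : cast to ℝ
      have := step_real k n hk hn
      have hcast : ((n + 1 - (k-1) : ℕ) : ℝ) = (n:ℝ)+2-(k:ℝ) := by
        have : (n + 1 - (k-1) : ℕ) = n + 2 - k := by omega
        rw [this]; push_cast [Nat.cast_sub (by omega : k ≤ n + 2)]; ring
      have h2 : ((k * n^(k^2) * (n+1) : ℕ) : ℝ) ≤ ((k * (n+1)^(k^2) * (n+1-(k-1)) : ℕ) : ℝ) := by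
        push_cast [hcast]
        calc (k:ℝ) * (n:ℝ)^(k^2) * ((n:ℝ)+1) = (k:ℝ) * ((n:ℝ)^(k^2) * ((n:ℝ)+1)) := by ring
          _ ≤ (k:ℝ) * (((n:ℝ)+1)^(k^2) * ((n:ℝ)+2-(k:ℝ))) := by
              apply mul_le_mul_of_nonneg_left this (by positivity)
          _ = (k:ℝ) * ((n:ℝ)+1)^(k^2) * ((n:ℝ)+2-(k:ℝ)) := by ring
      exact_mod_cast h2

lemma count_le (R : Type) [Fintype R] [DecidableEq R] (k : ℕ) (hk : 0 < k)
    (hR : k ≤ Fintype.card R) :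
    (Finset.univ.filter
        (fun f : Fin (k ^ 2) → R => (Finset.univ.image f).card < k)).card
      ≤ (Fintype.card R).choose (k-1) * (k-1)^(k^2) := by
  classical
  have hsub : (Finset.univ.filter
        (fun f : Fin (k ^ 2) → R => (Finset.univ.image f).card < k))
      ⊆ (Finset.univ.powersetCard (k-1)).biUnion
          (fun S => Fintype.piFinset (fun _ : Fin (k^2) => S)) := by
    intro f hf
    rw [Finset.mem_filter] at hf
    obtain ⟨-, hcard⟩ := hf
    have h1 : (Finset.univ.image f).card ≤ k - 1 := by omega
    obtain ⟨S, hSsub, hScard⟩ :=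
      Finset.exists_superset_card_eq h1 ((Nat.sub_le k 1).trans hR)
    rw [Finset.mem_biUnion]
    refine ⟨S, ?_, ?_⟩
    · rw [Finset.mem_powersetCard]; exact ⟨S.subset_univ, hScard⟩
    · rw [Fintype.mem_piFinset]
      intro i
      exact hSsub (Finset.mem_image_of_mem f (Finset.mem_univ i))
  calc _ ≤ _ := Finset.card_le_card hsub
    _ ≤ ∑ S ∈ Finset.univ.powersetCard (k-1),
          (Fintype.piFinset (fun _ : Fin (k^2) => S)).card := Finset.card_biUnion_le
    _ = ∑ S ∈ Finset.univ.powersetCard (k-1), (k-1)^(k^2) := by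
        apply Finset.sum_congr rfl
        intro S hS
        rw [Finset.mem_powersetCard] at hS
        rw [Fintype.card_piFinset]
        simp [hS.2]
    _ = (Fintype.card R).choose (k-1) * (k-1)^(k^2) := by
        rw [Finset.sum_const, Finset.card_powersetCard, Finset.card_univ, smul_eq_mul]

/-- **Birthday-type bound for collecting `k` distinct challenges.**
If `r₁, …, r_{k²}` are independent uniformly random elements of a finite set `R`
with `|R| ≥ k ≥ 1`, the probability that `{r₁, …, r_{k²}}` contains fewer than
`k` distinct elements is at most `k · ((k−1)/k)^{k²}`. -/
theorem few_distinct_challenges_bound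
    (R : Type) [Fintype R] [DecidableEq R]
    (k : ℕ) (hk : 0 < k) (hR : k ≤ Fintype.card R) :
    ((Finset.univ.filter
        (fun f : Fin (k ^ 2) → R => (Finset.univ.image f).card < k)).card : ℝ)
        / (Fintype.card (Fin (k ^ 2) → R) : ℝ)
      ≤ (k : ℝ) * (((k : ℝ) - 1) / (k : ℝ)) ^ (k ^ 2) := by
  classical
  set n := Fintype.card R with hn
  have hn0 : 0 < n := lt_of_lt_of_le hk hR
  have hcardfun : Fintype.card (Fin (k ^ 2) → R) = n ^ (k ^ 2) := by
    rw [Fintype.card_fun, Fintype.card_fin]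
  have hcount := count_le R k hk hR
  have hkey := key_nat k n hk hR
  have hk1 : ((k - 1 : ℕ) : ℝ) = (k : ℝ) - 1 := by
    push_cast [Nat.cast_sub hk]; ring
  have hkR : (0:ℝ) < (k:ℝ) := by exact_mod_cast hk
  have hnR : (0:ℝ) < (n:ℝ) := by exact_mod_cast hn0
  rw [hcardfun, div_pow]
  push_cast
  rw [div_le_iff₀ (by positivity : (0:ℝ) < (n:ℝ)^(k^2))]
  have hA : ((Finset.univ.filter
      (fun f : Fin (k ^ 2) → R => (Finset.univ.image f).card < k)).card : ℝ)
      ≤ (n.choose (k-1) : ℝ) * ((k:ℝ)-1)^(k^2) := by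
    rw [← hk1]
    exact_mod_cast hcount
  have hB : (n.choose (k-1) : ℝ) * (k:ℝ)^(k^2) ≤ (k:ℝ) * (n:ℝ)^(k^2) := by
    exact_mod_cast hkey
  have hkm : (0:ℝ) ≤ ((k:ℝ)-1)^(k^2) := by
    have h1k : (1:ℝ) ≤ (k:ℝ) := by exact_mod_cast hk
    have : (0:ℝ) ≤ (k:ℝ)-1 := by linarith
    positivity
  have hkp : (0:ℝ) < (k:ℝ)^(k^2) := by positivity
  calc ((Finset.univ.filter
        (fun f : Fin (k ^ 2) → R => (Finset.univ.image f).card < k)).card : ℝ)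
      ≤ (n.choose (k-1) : ℝ) * ((k:ℝ)-1)^(k^2) := hA
    _ = ((n.choose (k-1) : ℝ) * (k:ℝ)^(k^2)) * ((k:ℝ)-1)^(k^2) / (k:ℝ)^(k^2) := by
        field_simp
    _ ≤ ((k:ℝ) * (n:ℝ)^(k^2)) * ((k:ℝ)-1)^(k^2) / (k:ℝ)^(k^2) := by
        gcongr
    _ = (k:ℝ) * (((k:ℝ)-1)^(k^2) / (k:ℝ)^(k^2)) * (n:ℝ)^(k^2) := by
        field_simp
end

section
/- Let H be a finite-dimensional complex inner product space and let Π_A and Π_B be orthogonal projections on H. Then there exists a finite family (S_j)_{j∈J} of pairwise orthogonal subspaces of H whose sum is all of H such that: each S_j has dimension 1 or 2; each S_j is invariant under both Π_A and Π_B; on each one-dimensional S_j, each of Π_A and Π_B restricts either to the zero map or to the identity; and on each two-dimensional S_j there exist unit vectors v_j, w_j ∈ S_j such that Π_A x = ⟨v_j, x⟩ • v_j and Π_B x = ⟨w_j, x⟩ • w_j for every x ∈ S_j (i.e., Π_A and Π_B restrict to rank-one orthogonal projections on S_j). -/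
local notation "⟪" x ", " y "⟫" => @inner ℂ _ _ x y

open Module

section Aux

set_option linter.unusedSectionVars false

variable {H : Type} [NormedAddCommGroup H] [InnerProductSpace ℂ H] [FiniteDimensional ℂ H]

private lemma jordan_idem_fixed {P : H →ₗ[ℂ] H} (h : P ∘ₗ P = P) {v : H}
    (hv : v ∈ LinearMap.range P) : P v = v := by
  obtain ⟨u, rfl⟩ := hv
  simpa using LinearMap.ext_iff.mp h u

private lemma jordan_idem_eigen {P : H →ₗ[ℂ] H} (h : P ∘ₗ P = P) {v : H} (hv : v ≠ 0)
    {μ : ℂ} (hμ : P v = μ • v) : μ = 0 ∨ μ = 1 := by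
  have h1 : P (P v) = P v := LinearMap.ext_iff.mp h v
  rw [hμ, map_smul, hμ, smul_smul] at h1
  have h2 : (μ * μ - μ) • v = 0 := by rw [sub_smul, h1, sub_self]
  have h3 : μ * μ - μ = 0 := by
    rcases smul_eq_zero.mp h2 with h | h
    · exact h
    · exact absurd h hv
  have h4 : μ * (μ - 1) = 0 := by linear_combination h3
  rcases mul_eq_zero.mp h4 with h | h
  · exact Or.inl h
  · exact Or.inr (sub_eq_zero.mp h)

/-- One-dimensional Jordan block. -/
private lemma jordan_one_dim (PA PB : H →ₗ[ℂ] H)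
    (hPAidem : PA ∘ₗ PA = PA) (hPBidem : PB ∘ₗ PB = PB)
    (v : H) (hv : v ≠ 0) {α β : ℂ} (hα : PA v = α • v) (hβ : PB v = β • v) :
    ∃ S : Submodule ℂ H,
      (Module.finrank ℂ S = 1 ∨ Module.finrank ℂ S = 2) ∧
      (∀ x ∈ S, PA x ∈ S ∧ PB x ∈ S) ∧
      (Module.finrank ℂ S = 1 →
        ((∀ x ∈ S, PA x = 0) ∨ (∀ x ∈ S, PA x = x)) ∧
        ((∀ x ∈ S, PB x = 0) ∨ (∀ x ∈ S, PB x = x))) ∧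
      (Module.finrank ℂ S = 2 →
        ∃ v' w : H, v' ∈ S ∧ w ∈ S ∧ ‖v'‖ = 1 ∧ ‖w‖ = 1 ∧
          (∀ x ∈ S, PA x = ⟪v', x⟫ • v') ∧ (∀ x ∈ S, PB x = ⟪w, x⟫ • w)) := by
  refine ⟨Submodule.span ℂ {v}, Or.inl (finrank_span_singleton hv), ?_, ?_, ?_⟩
  · intro x hx
    obtain ⟨t, rfl⟩ := Submodule.mem_span_singleton.mp hx
    constructor
    · rw [map_smul, hα]
      exact Submodule.smul_mem _ _ (Submodule.smul_mem _ _ (Submodule.mem_span_singleton_self v))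
    · rw [map_smul, hβ]
      exact Submodule.smul_mem _ _ (Submodule.smul_mem _ _ (Submodule.mem_span_singleton_self v))
  · intro _
    have key : ∀ (P : H →ₗ[ℂ] H) (μ : ℂ), P v = μ • v → (μ = 0 ∨ μ = 1) →
        (∀ x ∈ Submodule.span ℂ {v}, P x = 0) ∨ (∀ x ∈ Submodule.span ℂ {v}, P x = x) := by
      intro P μ hμ hcases
      rcases hcases with rfl | rfl
      · left
        intro x hx
        obtain ⟨t, rfl⟩ := Submodule.mem_span_singleton.mp hx
        rw [map_smul, hμ, zero_smul, smul_zero]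
      · right
        intro x hx
        obtain ⟨t, rfl⟩ := Submodule.mem_span_singleton.mp hx
        rw [map_smul, hμ, one_smul]
    exact ⟨key PA α hα (jordan_idem_eigen hPAidem hv hα),
      key PB β hβ (jordan_idem_eigen hPBidem hv hβ)⟩
  · intro h2
    rw [finrank_span_singleton hv] at h2
    omega

/-- Existence of a single Jordan block. -/
private lemma jordan_block (hH : 0 < Module.finrank ℂ H)
    (PA PB : H →ₗ[ℂ] H) (hPAsym : PA.IsSymmetric) (hPAidem : PA ∘ₗ PA = PA)
    (hPBsym : PB.IsSymmetric) (hPBidem : PB ∘ₗ PB = PB) :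
    ∃ S : Submodule ℂ H,
      (Module.finrank ℂ S = 1 ∨ Module.finrank ℂ S = 2) ∧
      (∀ x ∈ S, PA x ∈ S ∧ PB x ∈ S) ∧
      (Module.finrank ℂ S = 1 →
        ((∀ x ∈ S, PA x = 0) ∨ (∀ x ∈ S, PA x = x)) ∧
        ((∀ x ∈ S, PB x = 0) ∨ (∀ x ∈ S, PB x = x))) ∧
      (Module.finrank ℂ S = 2 →
        ∃ v' w : H, v' ∈ S ∧ w ∈ S ∧ ‖v'‖ = 1 ∧ ‖w‖ = 1 ∧
          (∀ x ∈ S, PA x = ⟪v', x⟫ • v') ∧ (∀ x ∈ S, PB x = ⟪w, x⟫ • w)) := by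
  by_cases hA : LinearMap.range PA = ⊥
  · have hPA0 : ∀ x : H, PA x = 0 := by
      intro x
      have h := LinearMap.mem_range_self PA x
      rw [hA] at h
      simpa using h
    by_cases hB : LinearMap.range PB = ⊥
    · have hPB0 : ∀ x : H, PB x = 0 := by
        intro x
        have h := LinearMap.mem_range_self PB x
        rw [hB] at h
        simpa using h
      have : Nontrivial H := Module.finrank_pos_iff.mp hH
      obtain ⟨v, hv⟩ := exists_ne (0 : H)
      exact jordan_one_dim PA PB hPAidem hPBidem v hv
        (by rw [hPA0 v, zero_smul]) (by rw [hPB0 v, zero_smul])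
    · obtain ⟨v, hvmem, hv⟩ := Submodule.exists_mem_ne_zero_of_ne_bot hB
      exact jordan_one_dim PA PB hPAidem hPBidem v hv
        (by rw [hPA0 v, zero_smul])
        (by rw [jordan_idem_fixed hPBidem hvmem, one_smul])
  · -- `range PA` is nontrivial; find an eigenvector of `PA ∘ PB` on it.
    have hinvA : ∀ x ∈ LinearMap.range PA, (PA ∘ₗ PB) x ∈ LinearMap.range PA :=
      fun x _ => LinearMap.mem_range_self _ _
    haveI : Nontrivial (LinearMap.range PA) := Submodule.nontrivial_iff_ne_bot.mpr hA
    obtain ⟨c, hc⟩ := Module.End.exists_eigenvalue ((PA ∘ₗ PB).restrict hinvA)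
    obtain ⟨a, hae⟩ := hc.exists_hasEigenvector
    have ha : PA (PB (a : H)) = c • (a : H) := by
      have h := congrArg (Submodule.subtype (LinearMap.range PA)) hae.apply_eq_smul
      simpa using h
    have hv0ne : (a : H) ≠ 0 := fun h => hae.right (Subtype.ext h)
    set v : H := ((‖(a : H)‖ : ℂ))⁻¹ • (a : H) with hvdef
    have hvnorm : ‖v‖ = 1 := norm_smul_inv_norm hv0ne
    have hvne : v ≠ 0 := by
      intro h; rw [h, norm_zero] at hvnorm; norm_num at hvnorm
    have hPAv : PA v = v := by
      rw [hvdef, map_smul, jordan_idem_fixed hPAidem a.2]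
    have hPAPBv : PA (PB v) = c • v := by
      rw [hvdef, map_smul, map_smul, ha, smul_comm]
    clear_value v
    by_cases hPBv : PB v ∈ Submodule.span ℂ {v}
    · obtain ⟨μ, hμ⟩ := Submodule.mem_span_singleton.mp hPBv
      exact jordan_one_dim PA PB hPAidem hPBidem v hvne
        (by rw [hPAv, one_smul]) hμ.symm
    · -- genuine two-dimensional block
      set u : H := PB v with hudef
      have hune : u ≠ 0 := by
        intro h
        exact hPBv (h ▸ Submodule.zero_mem _)
      have hPAu : PA u = c • v := hPAPBv
      have hPBu : PB u = u := by
        have h := LinearMap.ext_iff.mp hPBidem v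
        simpa [hudef] using h
      clear_value u
      -- key scalar identities
      have hvv : ⟪v, v⟫ = 1 := by
        rw [inner_self_eq_norm_sq_to_K, hvnorm]; norm_num
      have hcv : ⟪v, u⟫ = c := by
        have h1 : ⟪v, u⟫ = ⟪PA v, u⟫ := by rw [hPAv]
        rw [h1, hPAsym v u, hPAu, inner_smul_right, hvv, mul_one]
      have huu : ⟪u, u⟫ = c := by
        have h2 : ⟪u, u⟫ = ⟪v, PB u⟫ := by
          rw [← hPBsym v u, hudef]
        rw [h2, hPBu, hcv]
      have hcreal : (starRingEnd ℂ) c = c := by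
        rw [← huu, inner_self_conj]
      have huv : ⟪u, v⟫ = c := by
        rw [← inner_conj_symm, hcv, hcreal]
      set ν : ℂ := (‖u‖ : ℂ) with hνdef
      have hνne : ν ≠ 0 := by
        simpa [hνdef] using hune
      have hνconj : (starRingEnd ℂ) ν = ν := Complex.conj_ofReal _
      have hcν : c = ν ^ 2 := by
        rw [← huu, inner_self_eq_norm_sq_to_K, hνdef]
        norm_cast
      -- the block subspace
      have hli : LinearIndependent ℂ ![v, u] := by
        rw [LinearIndependent.pair_iff' hvne]
        intro t ht
        exact hPBv (ht ▸ Submodule.smul_mem _ t (Submodule.mem_span_singleton_self v))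
      set S : Submodule ℂ H := Submodule.span ℂ (Set.range ![v, u]) with hSdef
      have hmem : ∀ x, x ∈ S → ∃ s t : ℂ, x = s • v + t • u := by
        intro x hx
        rw [hSdef, Submodule.mem_span_range_iff_exists_fun] at hx
        obtain ⟨f, hf⟩ := hx
        refine ⟨f 0, f 1, ?_⟩
        rw [← hf, Fin.sum_univ_two]
        simp
      have hvS : v ∈ S := Submodule.subset_span ⟨0, rfl⟩
      have huS : u ∈ S := Submodule.subset_span ⟨1, rfl⟩
      have hdim2 : Module.finrank ℂ S = 2 := by
        rw [hSdef, finrank_span_eq_card hli, Fintype.card_fin]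
      set w : H := ν⁻¹ • u with hwdef
      have hwnorm : ‖w‖ = 1 := by
        rw [hwdef, hνdef]
        exact norm_smul_inv_norm hune
      have hwS : w ∈ S := Submodule.smul_mem _ _ huS
      refine ⟨S, Or.inr hdim2, ?_, ?_, ?_⟩
      · intro x hx
        obtain ⟨s, t, rfl⟩ := hmem x hx
        constructor
        · rw [map_add, map_smul, map_smul, hPAv, hPAu]
          exact Submodule.add_mem _ (Submodule.smul_mem _ _ hvS)
            (Submodule.smul_mem _ _ (Submodule.smul_mem _ _ hvS))
        · rw [map_add, map_smul, map_smul, hPBu, ← hudef]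
          exact Submodule.add_mem _ (Submodule.smul_mem _ _ huS)
            (Submodule.smul_mem _ _ huS)
      · intro h1
        rw [hdim2] at h1
        omega
      · intro _
        refine ⟨v, w, hvS, hwS, hvnorm, hwnorm, ?_, ?_⟩
        · intro x hx
          obtain ⟨s, t, rfl⟩ := hmem x hx
          rw [map_add, map_smul, map_smul, hPAv, hPAu, inner_add_right,
            inner_smul_right, inner_smul_right, hvv, hcv, mul_one, add_smul, smul_smul]
        · intro x hx
          obtain ⟨s, t, rfl⟩ := hmem x hx
          rw [map_add, map_smul, map_smul, hPBu, ← hudef, hwdef, inner_smul_left,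
            inner_add_right, inner_smul_right, inner_smul_right, huv, huu, ← add_smul, smul_smul]
          congr 1
          rw [map_inv₀, hνconj, hcν]
          field_simp

/-- Jordan decomposition, by strong induction on the dimension. -/
private lemma jordan_aux :
    ∀ (n : ℕ) (H : Type) [NormedAddCommGroup H] [InnerProductSpace ℂ H]
      [FiniteDimensional ℂ H], Module.finrank ℂ H = n →
      ∀ (PA PB : H →ₗ[ℂ] H), PA.IsSymmetric → PA ∘ₗ PA = PA →
        PB.IsSymmetric → PB ∘ₗ PB = PB →
      ∃ (J : Type) (_ : Fintype J) (S : J → Submodule ℂ H),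
        (∀ j j', j ≠ j' → ∀ x ∈ S j, ∀ y ∈ S j', ⟪x, y⟫ = 0) ∧
        iSup S = ⊤ ∧
        (∀ j, Module.finrank ℂ ↥(S j) = 1 ∨ Module.finrank ℂ ↥(S j) = 2) ∧
        (∀ j, ∀ x ∈ S j, PA x ∈ S j ∧ PB x ∈ S j) ∧
        (∀ j, Module.finrank ℂ ↥(S j) = 1 →
          ((∀ x ∈ S j, PA x = 0) ∨ (∀ x ∈ S j, PA x = x)) ∧
          ((∀ x ∈ S j, PB x = 0) ∨ (∀ x ∈ S j, PB x = x))) ∧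
        (∀ j, Module.finrank ℂ ↥(S j) = 2 →
          ∃ v w : H, v ∈ S j ∧ w ∈ S j ∧ ‖v‖ = 1 ∧ ‖w‖ = 1 ∧
            (∀ x ∈ S j, PA x = ⟪v, x⟫ • v) ∧ (∀ x ∈ S j, PB x = ⟪w, x⟫ • w)) := by
  intro n
  induction n using Nat.strong_induction_on with
  | _ n ih =>
  intro H _ _ _ hn PA PB hPAsym hPAidem hPBsym hPBidem
  rcases Nat.eq_zero_or_pos n with rfl | hpos
  · refine ⟨Empty, inferInstance, fun j => j.elim, fun j => j.elim, ?_,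
      fun j => j.elim, fun j => j.elim, fun j => j.elim, fun j => j.elim⟩
    haveI : Subsingleton H := Module.finrank_zero_iff.mp hn
    refine eq_top_iff.mpr fun x _ => ?_
    rw [Subsingleton.elim x 0]
    exact Submodule.zero_mem _
  · have hH : 0 < Module.finrank ℂ H := hn ▸ hpos
    obtain ⟨S, hdim, hinv, h1d, h2d⟩ := jordan_block hH PA PB hPAsym hPAidem hPBsym hPBidem
    have hAK : ∀ x ∈ Sᗮ, PA x ∈ Sᗮ := by
      intro x hx
      rw [Submodule.mem_orthogonal] at hx ⊢
      intro uu hu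
      rw [← hPAsym uu x]
      exact hx _ (hinv uu hu).1
    have hBK : ∀ x ∈ Sᗮ, PB x ∈ Sᗮ := by
      intro x hx
      rw [Submodule.mem_orthogonal] at hx ⊢
      intro uu hu
      rw [← hPBsym uu x]
      exact hx _ (hinv uu hu).2
    have hA'sym : (PA.restrict hAK).IsSymmetric := fun x y => hPAsym (x : H) (y : H)
    have hB'sym : (PB.restrict hBK).IsSymmetric := fun x y => hPBsym (x : H) (y : H)
    have hA'idem : PA.restrict hAK ∘ₗ PA.restrict hAK = PA.restrict hAK :=
      LinearMap.ext fun x => Subtype.ext (LinearMap.ext_iff.mp hPAidem (x : H))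
    have hB'idem : PB.restrict hBK ∘ₗ PB.restrict hBK = PB.restrict hBK :=
      LinearMap.ext fun x => Subtype.ext (LinearMap.ext_iff.mp hPBidem (x : H))
    have hrank : Module.finrank ℂ Sᗮ < n := by
      have h := Submodule.finrank_add_finrank_orthogonal S
      rw [hn] at h
      have h1 : 1 ≤ Module.finrank ℂ S := by rcases hdim with h' | h' <;> omega
      omega
    obtain ⟨J', instJ', S', horth', hsup', hdim', hinv', h1', h2'⟩ :=
      ih _ hrank ↥Sᗮ rfl (PA.restrict hAK) (PB.restrict hBK) hA'sym hA'idem hB'sym hB'idem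
    refine ⟨Option J', inferInstance,
      fun j => Option.rec S (fun j' => (S' j').map Sᗮ.subtype) j, ?_, ?_, ?_, ?_, ?_, ?_⟩
    · intro j j' hne x hx y hy
      cases j with
      | none =>
        cases j' with
        | none => exact absurd rfl hne
        | some j2 =>
          obtain ⟨b, hb, rfl⟩ := Submodule.mem_map.mp hy
          exact (Submodule.mem_orthogonal S _).mp b.2 x hx
      | some j1 =>
        cases j' with
        | none =>
          obtain ⟨b, hb, rfl⟩ := Submodule.mem_map.mp hx
          exact inner_eq_zero_symm.mp ((Submodule.mem_orthogonal S _).mp b.2 y hy)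
        | some j2 =>
          obtain ⟨b1, hb1, rfl⟩ := Submodule.mem_map.mp hx
          obtain ⟨b2, hb2, rfl⟩ := Submodule.mem_map.mp hy
          have hne' : j1 ≠ j2 := fun h => hne (by rw [h])
          exact horth' j1 j2 hne' b1 hb1 b2 hb2
    · have h := iSup_option
        (fun j => @Option.rec J' (fun _ => Submodule ℂ H) S
          (fun j' => (S' j').map Sᗮ.subtype) j)
      rw [h, ← Submodule.map_iSup, hsup', Submodule.map_top, Submodule.range_subtype]
      exact Submodule.sup_orthogonal_of_hasOrthogonalProjection
    · intro j
      cases j with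
      | none => exact hdim
      | some j' =>
        rw [Submodule.finrank_map_subtype_eq]
        exact hdim' j'
    · intro j
      cases j with
      | none => exact hinv
      | some j' =>
        intro x hx
        obtain ⟨b, hb, rfl⟩ := Submodule.mem_map.mp hx
        exact ⟨⟨PA.restrict hAK b, (hinv' j' b hb).1, rfl⟩,
          ⟨PB.restrict hBK b, (hinv' j' b hb).2, rfl⟩⟩
    · intro j
      cases j with
      | none => exact h1d
      | some j' =>
        rw [Submodule.finrank_map_subtype_eq]
        intro hr
        obtain ⟨hA1, hB1⟩ := h1' j' hr
        constructor
        · rcases hA1 with h | h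
          · left
            intro x hx
            obtain ⟨b, hb, rfl⟩ := Submodule.mem_map.mp hx
            simpa using congrArg Sᗮ.subtype (h b hb)
          · right
            intro x hx
            obtain ⟨b, hb, rfl⟩ := Submodule.mem_map.mp hx
            exact congrArg Sᗮ.subtype (h b hb)
        · rcases hB1 with h | h
          · left
            intro x hx
            obtain ⟨b, hb, rfl⟩ := Submodule.mem_map.mp hx
            simpa using congrArg Sᗮ.subtype (h b hb)
          · right
            intro x hx
            obtain ⟨b, hb, rfl⟩ := Submodule.mem_map.mp hx
            exact congrArg Sᗮ.subtype (h b hb)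
    · intro j
      cases j with
      | none => exact h2d
      | some j' =>
        rw [Submodule.finrank_map_subtype_eq]
        intro hr
        obtain ⟨v, w, hv, hw, hnv, hnw, hfa, hfb⟩ := h2' j' hr
        refine ⟨↑v, ↑w, ⟨v, hv, rfl⟩, ⟨w, hw, rfl⟩, hnv, hnw, ?_, ?_⟩
        · intro x hx
          obtain ⟨b, hb, rfl⟩ := Submodule.mem_map.mp hx
          simpa [Submodule.coe_inner] using congrArg Sᗮ.subtype (hfa b hb)
        · intro x hx
          obtain ⟨b, hb, rfl⟩ := Submodule.mem_map.mp hx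
          simpa [Submodule.coe_inner] using congrArg Sᗮ.subtype (hfb b hb)

end Aux

/-- **Jordan's lemma.**
For any two orthogonal projections `PA, PB` on a finite-dimensional complex inner
product space `H`, there is a finite family of pairwise orthogonal subspaces `S j`
spanning `H`, each of dimension `1` or `2` and invariant under both `PA` and `PB`,
such that on each one-dimensional `S j` each of `PA, PB` restricts to `0` or to the
identity, and on each two-dimensional `S j` both `PA` and `PB` restrict to rank-one
orthogonal projections `x ↦ ⟪v, x⟫ • v`, `x ↦ ⟪w, x⟫ • w` for unit vectors
`v, w ∈ S j`. -/
theorem jordan_lemma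
    {H : Type} [NormedAddCommGroup H] [InnerProductSpace ℂ H] [FiniteDimensional ℂ H]
    (PA PB : H →ₗ[ℂ] H)
    (hPAsym : PA.IsSymmetric) (hPAidem : PA ∘ₗ PA = PA)
    (hPBsym : PB.IsSymmetric) (hPBidem : PB ∘ₗ PB = PB) :
    ∃ (J : Type) (_ : Fintype J) (S : J → Submodule ℂ H),
      (∀ j j', j ≠ j' → ∀ x ∈ S j, ∀ y ∈ S j', ⟪x, y⟫ = 0) ∧
      iSup S = ⊤ ∧
      (∀ j, Module.finrank ℂ ↥(S j) = 1 ∨ Module.finrank ℂ ↥(S j) = 2) ∧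
      (∀ j, ∀ x ∈ S j, PA x ∈ S j ∧ PB x ∈ S j) ∧
      (∀ j, Module.finrank ℂ ↥(S j) = 1 →
        ((∀ x ∈ S j, PA x = 0) ∨ (∀ x ∈ S j, PA x = x)) ∧
        ((∀ x ∈ S j, PB x = 0) ∨ (∀ x ∈ S j, PB x = x))) ∧
      (∀ j, Module.finrank ℂ ↥(S j) = 2 →
        ∃ v w : H, v ∈ S j ∧ w ∈ S j ∧ ‖v‖ = 1 ∧ ‖w‖ = 1 ∧
          (∀ x ∈ S j, PA x = ⟪v, x⟫ • v) ∧ (∀ x ∈ S j, PB x = ⟪w, x⟫ • w)) :=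
  jordan_aux (Module.finrank ℂ H) H rfl PA PB hPAsym hPAidem hPBsym hPBidem
end
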